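/- arXiv:2601.22843 — 2 statements merged into one kernel-verified Lean document; each statement's English description precedes it below -/
import Mathlib

section
/- Let P₁ be the orthogonal projection onto a k₁-dimensional subspace V₁ of ℝⁿ, P₂ the orthogonal projection onto a k₂-dimensional subspace V₂, S the orthogonal projection onto V₁ ∩ V₂ (of dimension k), and Q any real symmetric projection matrix. Then for each i with 1 ≤ i ≤ n - (k₂ - k): λ_i(QP₁) ≥ λ_i(QS) ≥ λ_{i + k₂ - k}(QP₂), where λ_j(M) denotes the j-th largest eigenvalue. -/
open Matrix Polynomial Module Finset

namespace Interlace

variable {n : ℕ}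

lemma eval_charpoly (M : Matrix (Fin n) (Fin n) ℝ) (t : ℝ) :
    M.charpoly.eval t = Matrix.det (t • (1 : Matrix (Fin n) (Fin n) ℝ) - M) := by
  rw [Matrix.charpoly, ← Polynomial.coe_evalRingHom, RingHom.map_det]
  congr 1
  ext i j
  by_cases h : i = j
  · subst h
    simp [Matrix.charmatrix_apply_eq, Matrix.one_apply]
  · simp [Matrix.charmatrix_apply_ne _ _ _ h, Matrix.one_apply, h]

lemma charpoly_mul_comm (A B : Matrix (Fin n) (Fin n) ℝ) :
    (A * B).charpoly = (B * A).charpoly := by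
  apply Polynomial.eq_of_infinite_eval_eq
  apply Set.Infinite.mono (s := {t : ℝ | t ≠ 0})
  · intro t ht
    have h1 : t • ((1 : Matrix (Fin n) (Fin n) ℝ) - (t⁻¹ • A) * B)
        = t • (1 : Matrix (Fin n) (Fin n) ℝ) - A * B := by
      rw [smul_sub, Matrix.smul_mul, smul_smul, mul_inv_cancel₀ ht, one_smul]
    have h2 : t • ((1 : Matrix (Fin n) (Fin n) ℝ) - B * (t⁻¹ • A))
        = t • (1 : Matrix (Fin n) (Fin n) ℝ) - B * A := by
      rw [smul_sub, Matrix.mul_smul, smul_smul, mul_inv_cancel₀ ht, one_smul]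
    show (A*B).charpoly.eval t = (B*A).charpoly.eval t
    rw [eval_charpoly, eval_charpoly, ← h1, ← h2, Matrix.det_smul, Matrix.det_smul,
      Matrix.det_one_sub_mul_comm]
  · have : ({t : ℝ | t ≠ 0}) = ({(0:ℝ)} : Set ℝ)ᶜ := by ext; simp
    rw [this]
    exact (Set.finite_singleton 0).infinite_compl

lemma charpoly_diagonal (d : Fin n → ℝ) :
    (Matrix.diagonal d).charpoly = ∏ i, (X - C (d i)) := by
  have h : (Matrix.diagonal d).charmatrix = Matrix.diagonal (fun i => X - C (d i)) := by
    ext i j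
    by_cases h : i = j
    · subst h; simp [Matrix.charmatrix_apply_eq]
    · simp [Matrix.charmatrix_apply_ne _ _ _ h, Matrix.diagonal_apply_ne _ h, h]
  rw [Matrix.charpoly, h, Matrix.det_diagonal]

lemma charpoly_hermitian {B : Matrix (Fin n) (Fin n) ℝ} (hB : B.IsHermitian) :
    B.charpoly = ∏ i, (X - C (hB.eigenvalues i)) := by
  have hspec : B = (hB.eigenvectorUnitary : Matrix (Fin n) (Fin n) ℝ) * diagonal hB.eigenvalues *
      star (hB.eigenvectorUnitary : Matrix (Fin n) (Fin n) ℝ) := by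
    simpa using hB.spectral_theorem
  have hU : star (hB.eigenvectorUnitary : Matrix (Fin n) (Fin n) ℝ) *
      (hB.eigenvectorUnitary : Matrix (Fin n) (Fin n) ℝ) = 1 :=
    mem_unitaryGroup_iff'.mp hB.eigenvectorUnitary.2
  conv_lhs => rw [hspec]
  rw [charpoly_mul_comm, ← Matrix.mul_assoc, hU, Matrix.one_mul, charpoly_diagonal]

lemma multiset_eq_of_prod_eq {a b : Fin n → ℝ}
    (h : ∏ i, (X - C (a i)) = ∏ i, (X - C (b i))) :
    Multiset.map a Finset.univ.val = Multiset.map b Finset.univ.val := by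
  have ha : ∏ i, (X - C (a i)) = (Multiset.map (fun r => X - C r)
      (Multiset.map a Finset.univ.val)).prod := by
    rw [Multiset.map_map, Finset.prod_eq_multiset_prod]; rfl
  have hb : ∏ i, (X - C (b i)) = (Multiset.map (fun r => X - C r)
      (Multiset.map b Finset.univ.val)).prod := by
    rw [Multiset.map_map, Finset.prod_eq_multiset_prod]; rfl
  have := congrArg Polynomial.roots (ha.symm.trans (h.trans hb))
  rwa [Polynomial.roots_multiset_prod_X_sub_C, Polynomial.roots_multiset_prod_X_sub_C] at this

lemma card_filter_congr {a b : Fin n → ℝ}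
    (h : Multiset.map a Finset.univ.val = Multiset.map b Finset.univ.val)
    (p : ℝ → Prop) [DecidablePred p] :
    (Finset.univ.filter fun m => p (a m)).card = (Finset.univ.filter fun m => p (b m)).card := by
  have := congrArg (Multiset.countP p) h
  rw [Multiset.countP_map, Multiset.countP_map] at this
  simpa [Finset.card, Finset.filter] using this



/-- standard basis vector -/
def sb (j : Fin n) : Fin n → ℝ := Pi.single j (1 : ℝ)

/-- vectors supported on T -/
def coordSub (T : Finset (Fin n)) : Submodule ℝ (Fin n → ℝ) where
  carrier := {y | ∀ j ∉ T, y j = 0}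
  add_mem' := fun ha hb j hj => by simp [Set.mem_setOf_eq] at ha hb ⊢; simp [ha j hj, hb j hj]
  zero_mem' := fun j _ => rfl
  smul_mem' := fun c y hy j hj => by simp [Set.mem_setOf_eq] at hy ⊢; simp [hy j hj]

lemma mem_coordSub {T : Finset (Fin n)} {y : Fin n → ℝ} :
    y ∈ coordSub T ↔ ∀ j ∉ T, y j = 0 := Iff.rfl

lemma coordSub_eq_span (T : Finset (Fin n)) :
    coordSub T = Submodule.span ℝ (Set.range fun j : T => sb (j : Fin n)) := by
  apply le_antisymm
  · intro y hy
    have hrepr : y = ∑ j ∈ T, y j • sb j := by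
      funext m
      rw [Finset.sum_apply]
      by_cases hm : m ∈ T
      · rw [Finset.sum_eq_single m]
        · simp [sb]
        · intro b _ hb; simp [sb, Pi.single_apply, hb]
        · intro h; exact absurd hm h
      · rw [Finset.sum_eq_zero, hy m hm]
        intro b hb
        have hmb : b ≠ m := fun h => hm (by rw [← h]; exact hb)
        simp [sb, Pi.single_apply, hmb]
    rw [hrepr]
    exact Submodule.sum_mem _ fun j hj => Submodule.smul_mem _ _
      (Submodule.subset_span ⟨⟨j, hj⟩, rfl⟩)
  · rw [Submodule.span_le]
    rintro _ ⟨⟨j, hj⟩, rfl⟩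
    intro m hm
    exact Pi.single_eq_of_ne (fun h => hm (by simp only [h]; exact hj)) 1

lemma finrank_coordSub (T : Finset (Fin n)) : finrank ℝ (coordSub T) = T.card := by
  rw [coordSub_eq_span]
  have li : LinearIndependent ℝ (fun j : T => sb (j : Fin n)) := by
    have := (Pi.basisFun ℝ (Fin n)).linearIndependent
    have h2 := this.comp (fun j : T => (j : Fin n)) Subtype.val_injective
    have h3 : (⇑(Pi.basisFun ℝ (Fin n)) ∘ fun j : T => (j : Fin n)) = fun j : T => sb (j : Fin n) := by
      funext j; simp only [Function.comp_apply, Pi.basisFun_apply]; rfl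
    rwa [h3] at h2
  rw [finrank_span_eq_card li, Fintype.card_coe]

lemma dot_sym {M : Matrix (Fin n) (Fin n) ℝ} (hM : Mᵀ = M) (x y : Fin n → ℝ) :
    x ⬝ᵥ (M *ᵥ y) = (M *ᵥ x) ⬝ᵥ y := by
  rw [Matrix.dotProduct_mulVec, ← hM, Matrix.vecMul_transpose, hM]

lemma mulVec_eq_sum_cols (U : Matrix (Fin n) (Fin n) ℝ) (y : Fin n → ℝ) :
    U *ᵥ y = ∑ m, y m • (fun i => U i m) := by
  funext i
  rw [Finset.sum_apply]
  simp only [Pi.smul_apply, smul_eq_mul]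
  simp [Matrix.mulVec, dotProduct, mul_comm]


variable {n : ℕ}

lemma dot_mulVec_left (A : Matrix (Fin n) (Fin n) ℝ) (x y : Fin n → ℝ) :
    (A *ᵥ x) ⬝ᵥ y = x ⬝ᵥ (Aᵀ *ᵥ y) := by
  rw [dotProduct_comm, Matrix.dotProduct_mulVec, Matrix.mulVec_transpose,
    dotProduct_comm]

lemma quad_norm {U : Matrix (Fin n) (Fin n) ℝ} (hU : star U * U = 1) (y : Fin n → ℝ) :
    (U *ᵥ y) ⬝ᵥ (U *ᵥ y) = ∑ m, (y m) ^ 2 := by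
  have hUt : Uᵀ * U = 1 := by
    rwa [Matrix.star_eq_conjTranspose, Matrix.conjTranspose_eq_transpose_of_trivial] at hU
  calc (U *ᵥ y) ⬝ᵥ (U *ᵥ y) = y ⬝ᵥ (Uᵀ *ᵥ (U *ᵥ y)) := dot_mulVec_left U y _
    _ = y ⬝ᵥ y := by rw [Matrix.mulVec_mulVec, hUt, Matrix.one_mulVec]
    _ = ∑ m, (y m) ^ 2 := by simp [dotProduct, sq]

lemma quad_form {U : Matrix (Fin n) (Fin n) ℝ} (hU : star U * U = 1) (lam y : Fin n → ℝ) :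
    (U *ᵥ y) ⬝ᵥ ((U * diagonal lam * star U) *ᵥ (U *ᵥ y)) = ∑ m, lam m * (y m) ^ 2 := by
  have hUt : Uᵀ * U = 1 := by
    rwa [Matrix.star_eq_conjTranspose, Matrix.conjTranspose_eq_transpose_of_trivial] at hU
  have hB : (U * diagonal lam * star U) *ᵥ (U *ᵥ y) = U *ᵥ (diagonal lam *ᵥ y) := by
    rw [Matrix.mulVec_mulVec, Matrix.mul_assoc, Matrix.mul_assoc, hU, Matrix.mul_one,
      ← Matrix.mulVec_mulVec]
  rw [hB]
  calc (U *ᵥ y) ⬝ᵥ (U *ᵥ (diagonal lam *ᵥ y))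
      = y ⬝ᵥ (Uᵀ *ᵥ (U *ᵥ (diagonal lam *ᵥ y))) := dot_mulVec_left U y _
    _ = y ⬝ᵥ (diagonal lam *ᵥ y) := by
        rw [Matrix.mulVec_mulVec, Matrix.mulVec_mulVec, hUt, Matrix.one_mul]
    _ = ∑ m, lam m * (y m) ^ 2 := by
        simp only [Matrix.mulVec_diagonal, dotProduct]
        exact Finset.sum_congr rfl fun m _ => by ring

/-- the subspace spanned by the columns of U indexed by T -/
lemma Zspace (U : Matrix (Fin n) (Fin n) ℝ) (hU : star U * U = 1) (hU2 : U * star U = 1)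
    (T : Finset (Fin n)) :
    ∃ Z : Submodule ℝ (Fin n → ℝ), finrank ℝ Z = T.card ∧
      (∀ x ∈ Z, ∃ y : Fin n → ℝ, (∀ m ∉ T, y m = 0) ∧ x = U *ᵥ y) := by
  let e : (Fin n → ℝ) ≃ₗ[ℝ] (Fin n → ℝ) :=
    LinearEquiv.ofLinear U.mulVecLin (star U).mulVecLin
      (by rw [← Matrix.mulVecLin_mul, hU2, Matrix.mulVecLin_one])
      (by rw [← Matrix.mulVecLin_mul, hU, Matrix.mulVecLin_one])
  refine ⟨Submodule.map (e : (Fin n → ℝ) →ₗ[ℝ] (Fin n → ℝ)) (coordSub T), ?_, ?_⟩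
  · rw [LinearEquiv.finrank_map_eq, finrank_coordSub]
  · rintro x ⟨y, hy, rfl⟩
    exact ⟨y, hy, rfl⟩


lemma dot_self_pos {x : Fin n → ℝ} (h : x ≠ 0) : 0 < x ⬝ᵥ x := by
  have h1 : 0 ≤ x ⬝ᵥ x := Finset.sum_nonneg fun i _ => mul_self_nonneg _
  rcases h1.lt_or_eq with h2 | h2
  · exact h2
  · exact absurd (dotProduct_self_eq_zero.mp h2.symm) h

lemma inter_nonzero (W Z : Submodule ℝ (Fin n → ℝ)) (h : n < finrank ℝ W + finrank ℝ Z) :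
    ∃ x, x ∈ W ⊓ Z ∧ x ≠ 0 := by
  have hid := Submodule.finrank_sup_add_finrank_inf_eq W Z
  have hsup : finrank ℝ ↥(W ⊔ Z) ≤ n := by
    have h2 := Submodule.finrank_le (W ⊔ Z)
    rwa [Module.finrank_fin_fun] at h2
  have hbot : (W ⊓ Z) ≠ ⊥ := by
    intro hb
    rw [hb, finrank_bot] at hid
    omega
  obtain ⟨x, hx, hx0⟩ := Submodule.exists_mem_ne_zero_of_ne_bot hbot
  exact ⟨x, hx, hx0⟩

lemma eig_nonneg {B : Matrix (Fin n) (Fin n) ℝ} (hB : B.IsHermitian)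
    (hpos : ∀ x, 0 ≤ x ⬝ᵥ (B *ᵥ x)) (m : Fin n) : 0 ≤ hB.eigenvalues m := by
  have he : B *ᵥ ⇑(hB.eigenvectorBasis m) = hB.eigenvalues m • ⇑(hB.eigenvectorBasis m) :=
    hB.mulVec_eigenvectorBasis m
  set e : Fin n → ℝ := ⇑(hB.eigenvectorBasis m) with hedef
  have h0 : e ≠ 0 := by
    intro h
    apply hB.eigenvectorBasis.orthonormal.ne_zero m
    ext i; exact congrFun h i
  have hd : 0 < e ⬝ᵥ e := dot_self_pos h0
  have h1 : e ⬝ᵥ (B *ᵥ e) = hB.eigenvalues m * (e ⬝ᵥ e) := by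
    rw [he, dotProduct_smul]; rfl
  nlinarith [hpos e]

lemma L1 {B : Matrix (Fin n) (Fin n) ℝ} (hB : B.IsHermitian) {a : Fin n → ℝ} (ha : Antitone a)
    (hm : Multiset.map a Finset.univ.val = Multiset.map hB.eigenvalues Finset.univ.val)
    (i : Fin n) (c : ℝ) (W : Submodule ℝ (Fin n → ℝ)) (hdim : (i : ℕ) + 1 ≤ finrank ℝ W)
    (hray : ∀ x ∈ W, c * (x ⬝ᵥ x) ≤ x ⬝ᵥ (B *ᵥ x)) : c ≤ a i := by
  by_contra hlt
  push_neg at hlt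
  set U : Matrix (Fin n) (Fin n) ℝ := (hB.eigenvectorUnitary : Matrix (Fin n) (Fin n) ℝ) with hUdef
  have hU1 : star U * U = 1 := mem_unitaryGroup_iff'.mp hB.eigenvectorUnitary.2
  have hU2 : U * star U = 1 := mem_unitaryGroup_iff.mp hB.eigenvectorUnitary.2
  set lam := hB.eigenvalues with hlam
  have hcompl : (Finset.univ.filter fun m => ¬ lam m < c).card ≤ (i : ℕ) := by
    have hc := card_filter_congr hm (fun r => ¬ r < c)
    rw [← hc]
    have hsub : (Finset.univ.filter fun m => ¬ a m < c) ⊆ Finset.Iio i := by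
      intro m hm'
      simp only [Finset.mem_filter, not_lt] at hm'
      rw [Finset.mem_Iio]
      by_contra hge
      push_neg at hge
      exact absurd (lt_of_le_of_lt (ha hge) hlt) (not_lt.mpr hm'.2)
    calc (Finset.univ.filter fun m => ¬ a m < c).card ≤ (Finset.Iio i).card :=
          Finset.card_le_card hsub
      _ = (i : ℕ) := Fin.card_Iio i
  have h3 := Finset.card_filter_add_card_filter_not
    (s := (Finset.univ : Finset (Fin n))) (p := fun m => lam m < c)
  rw [Finset.card_univ, Fintype.card_fin] at h3
  obtain ⟨Z, hZr, hZmem⟩ := Zspace U hU1 hU2 (Finset.univ.filter (fun m => lam m < c))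
  obtain ⟨x, hxWZ, hx0⟩ := inter_nonzero W Z (by rw [hZr]; omega)
  obtain ⟨y, hysupp, hxy⟩ := hZmem x hxWZ.2
  have hy0 : y ≠ 0 := fun h => hx0 (by rw [hxy, h, Matrix.mulVec_zero])
  have hspec : B = U * diagonal lam * star U := by simpa using hB.spectral_theorem
  have hBx : B *ᵥ x = (U * diagonal lam * star U) *ᵥ x := congrArg (fun M => M *ᵥ x) hspec
  have hform : x ⬝ᵥ (B *ᵥ x) = ∑ m, lam m * (y m) ^ 2 := by
    rw [hBx, hxy]
    exact quad_form hU1 lam y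
  have hnorm : x ⬝ᵥ x = ∑ m, (y m) ^ 2 := by rw [hxy]; exact quad_norm hU1 y
  obtain ⟨m₀, hm₀⟩ := Function.ne_iff.mp hy0
  have hm₀T : m₀ ∈ Finset.univ.filter (fun m => lam m < c) := by
    by_contra h; exact hm₀ (hysupp m₀ h)
  have hm₀lam : lam m₀ < c := (Finset.mem_filter.mp hm₀T).2
  have hsum : ∑ m, lam m * (y m) ^ 2 < ∑ m, c * (y m) ^ 2 := by
    refine Finset.sum_lt_sum (fun m _ => ?_) ⟨m₀, Finset.mem_univ _, ?_⟩
    · by_cases hmT : m ∈ Finset.univ.filter (fun m => lam m < c)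
      · exact mul_le_mul_of_nonneg_right (le_of_lt (Finset.mem_filter.mp hmT).2) (sq_nonneg _)
      · rw [hysupp m hmT]; simp
    · have hy2 : 0 < (y m₀) ^ 2 := lt_of_le_of_ne (sq_nonneg _) (Ne.symm (pow_ne_zero 2 hm₀))
      exact mul_lt_mul_of_pos_right hm₀lam hy2
  have h1 := hray x hxWZ.1
  rw [hform, hnorm] at h1
  rw [← Finset.mul_sum] at hsum
  linarith

lemma L2 {B : Matrix (Fin n) (Fin n) ℝ} (hB : B.IsHermitian) {a : Fin n → ℝ} (ha : Antitone a)
    (hm : Multiset.map a Finset.univ.val = Multiset.map hB.eigenvalues Finset.univ.val)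
    (i : Fin n) (c : ℝ) (W : Submodule ℝ (Fin n → ℝ)) (hdim : n ≤ finrank ℝ W + (i : ℕ))
    (hray : ∀ x ∈ W, x ⬝ᵥ (B *ᵥ x) ≤ c * (x ⬝ᵥ x)) : a i ≤ c := by
  by_contra hlt
  push_neg at hlt
  set U : Matrix (Fin n) (Fin n) ℝ := (hB.eigenvectorUnitary : Matrix (Fin n) (Fin n) ℝ) with hUdef
  have hU1 : star U * U = 1 := mem_unitaryGroup_iff'.mp hB.eigenvectorUnitary.2
  have hU2 : U * star U = 1 := mem_unitaryGroup_iff.mp hB.eigenvectorUnitary.2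
  set lam := hB.eigenvalues with hlam
  have hTbig : (i : ℕ) + 1 ≤ (Finset.univ.filter fun m => c < lam m).card := by
    have hc := card_filter_congr hm (fun r => c < r)
    have hsub : Finset.Iic i ⊆ (Finset.univ.filter fun m => c < a m) := by
      intro m hm'
      rw [Finset.mem_Iic] at hm'
      exact Finset.mem_filter.mpr ⟨Finset.mem_univ _, lt_of_lt_of_le hlt (ha hm')⟩
    calc (i : ℕ) + 1 = (Finset.Iic i).card := (Fin.card_Iic i).symm
      _ ≤ (Finset.univ.filter fun m => c < a m).card := Finset.card_le_card hsub
      _ = (Finset.univ.filter fun m => c < lam m).card := hc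
  obtain ⟨Z, hZr, hZmem⟩ := Zspace U hU1 hU2 (Finset.univ.filter fun m => c < lam m)
  obtain ⟨x, hxWZ, hx0⟩ := inter_nonzero W Z (by rw [hZr]; omega)
  obtain ⟨y, hysupp, hxy⟩ := hZmem x hxWZ.2
  have hy0 : y ≠ 0 := fun h => hx0 (by rw [hxy, h, Matrix.mulVec_zero])
  have hspec : B = U * diagonal lam * star U := by simpa using hB.spectral_theorem
  have hBx : B *ᵥ x = (U * diagonal lam * star U) *ᵥ x := congrArg (fun M => M *ᵥ x) hspec
  have hform : x ⬝ᵥ (B *ᵥ x) = ∑ m, lam m * (y m) ^ 2 := by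
    rw [hBx, hxy]
    exact quad_form hU1 lam y
  have hnorm : x ⬝ᵥ x = ∑ m, (y m) ^ 2 := by rw [hxy]; exact quad_norm hU1 y
  obtain ⟨m₀, hm₀⟩ := Function.ne_iff.mp hy0
  have hm₀T : m₀ ∈ Finset.univ.filter (fun m => c < lam m) := by
    by_contra h; exact hm₀ (hysupp m₀ h)
  have hm₀lam : c < lam m₀ := (Finset.mem_filter.mp hm₀T).2
  have hsum : ∑ m, c * (y m) ^ 2 < ∑ m, lam m * (y m) ^ 2 := by
    refine Finset.sum_lt_sum (fun m _ => ?_) ⟨m₀, Finset.mem_univ _, ?_⟩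
    · by_cases hmT : m ∈ Finset.univ.filter (fun m => c < lam m)
      · exact mul_le_mul_of_nonneg_right (le_of_lt (Finset.mem_filter.mp hmT).2) (sq_nonneg _)
      · rw [hysupp m hmT]; simp
    · have hy2 : 0 < (y m₀) ^ 2 := lt_of_le_of_ne (sq_nonneg _) (Ne.symm (pow_ne_zero 2 hm₀))
      exact mul_lt_mul_of_pos_right hm₀lam hy2
  have h1 := hray x hxWZ.1
  rw [hform, hnorm] at h1
  rw [← Finset.mul_sum] at hsum
  linarith

lemma herm_of_symm {M : Matrix (Fin n) (Fin n) ℝ} (h : Mᵀ = M) : M.IsHermitian := by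
  show Mᴴ = M
  rw [Matrix.conjTranspose_eq_transpose_of_trivial]
  exact h

lemma charpoly_QP {P Q : Matrix (Fin n) (Fin n) ℝ} (hP : P ^ 2 = P) :
    (Q * P).charpoly = (P * Q * P).charpoly := by
  have hPP : P * P = P := by rw [← pow_two]; exact hP
  calc (Q * P).charpoly = ((Q * P) * P).charpoly := by rw [Matrix.mul_assoc, hPP]
    _ = (P * (Q * P)).charpoly := charpoly_mul_comm _ _
    _ = (P * Q * P).charpoly := by rw [Matrix.mul_assoc]

lemma fix_range {P : Matrix (Fin n) (Fin n) ℝ} (hP : P ^ 2 = P) {x : Fin n → ℝ}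
    (hx : x ∈ LinearMap.range P.mulVecLin) : P *ᵥ x = x := by
  have hPP : P * P = P := by rw [← pow_two]; exact hP
  obtain ⟨y, rfl⟩ := hx
  show P *ᵥ (P *ᵥ y) = P *ᵥ y
  rw [Matrix.mulVec_mulVec, hPP]

lemma dot_self_nonneg (x : Fin n → ℝ) : 0 ≤ x ⬝ᵥ x :=
  Finset.sum_nonneg fun i _ => mul_self_nonneg _

lemma Qform_nonneg {Q : Matrix (Fin n) (Fin n) ℝ} (hQs : Qᵀ = Q) (hQ : Q ^ 2 = Q)
    (v : Fin n → ℝ) : 0 ≤ v ⬝ᵥ (Q *ᵥ v) := by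
  have hQQ : Q * Q = Q := by rw [← pow_two]; exact hQ
  have h1 : v ⬝ᵥ (Q *ᵥ v) = (Q *ᵥ v) ⬝ᵥ (Q *ᵥ v) := by
    conv_lhs => rw [← hQQ, ← Matrix.mulVec_mulVec, dot_sym hQs]
  rw [h1]
  exact dot_self_nonneg _

lemma form_PQP {P Q : Matrix (Fin n) (Fin n) ℝ} (hPs : Pᵀ = P) (x : Fin n → ℝ) :
    x ⬝ᵥ ((P * Q * P) *ᵥ x) = (P *ᵥ x) ⬝ᵥ (Q *ᵥ (P *ᵥ x)) := by
  rw [← Matrix.mulVec_mulVec, ← Matrix.mulVec_mulVec, dot_sym hPs]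

end Interlace

open Interlace

/-- Interlacing inequalities (Thompson): let P₁, P₂ be orthogonal projections onto
subspaces of dimensions k₁, k₂, S the orthogonal projection onto their intersection
of dimension k, and Q a real symmetric projection. If μ, ν, ρ are the decreasingly
ordered eigenvalue lists of QP₁, QS, QP₂ (roots of their characteristic
polynomials), then λ_i(QP₁) ≥ λ_i(QS) ≥ λ_{i+k₂-k}(QP₂). -/
theorem eigenvalue_interlacing {n k k₁ k₂ : ℕ}
    (P₁ P₂ S Q : Matrix (Fin n) (Fin n) ℝ)
    (hP₁s : P₁.transpose = P₁) (hP₁ : P₁ ^ 2 = P₁) (hk₁ : P₁.rank = k₁)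
    (hP₂s : P₂.transpose = P₂) (hP₂ : P₂ ^ 2 = P₂) (hk₂ : P₂.rank = k₂)
    (hSs : S.transpose = S) (hS : S ^ 2 = S) (hk : S.rank = k)
    (hrange : LinearMap.range S.mulVecLin
      = LinearMap.range P₁.mulVecLin ⊓ LinearMap.range P₂.mulVecLin)
    (hQs : Q.transpose = Q) (hQ : Q ^ 2 = Q)
    (μ ν ρ : Fin n → ℝ) (hμa : Antitone μ) (hνa : Antitone ν) (hρa : Antitone ρ)
    (hμ : (Q * P₁).charpoly = ∏ i : Fin n, (Polynomial.X - Polynomial.C (μ i)))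
    (hν : (Q * S).charpoly = ∏ i : Fin n, (Polynomial.X - Polynomial.C (ν i)))
    (hρ : (Q * P₂).charpoly = ∏ i : Fin n, (Polynomial.X - Polynomial.C (ρ i))) :
    ∀ i j : Fin n, (j : ℕ) = (i : ℕ) + (k₂ - k) → ν i ≤ μ i ∧ ρ j ≤ ν i := by
  intro i j hij
  have hB1 : (P₁ * Q * P₁).IsHermitian := herm_of_symm
    (by rw [Matrix.transpose_mul, Matrix.transpose_mul, hP₁s, hQs, Matrix.mul_assoc])
  have hBs : (S * Q * S).IsHermitian := herm_of_symm
    (by rw [Matrix.transpose_mul, Matrix.transpose_mul, hSs, hQs, Matrix.mul_assoc])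
  have hB2 : (P₂ * Q * P₂).IsHermitian := herm_of_symm
    (by rw [Matrix.transpose_mul, Matrix.transpose_mul, hP₂s, hQs, Matrix.mul_assoc])
  have hm1 : Multiset.map μ Finset.univ.val = Multiset.map hB1.eigenvalues Finset.univ.val :=
    multiset_eq_of_prod_eq (hμ.symm.trans ((charpoly_QP hP₁).trans (charpoly_hermitian hB1)))
  have hms : Multiset.map ν Finset.univ.val = Multiset.map hBs.eigenvalues Finset.univ.val :=
    multiset_eq_of_prod_eq (hν.symm.trans ((charpoly_QP hS).trans (charpoly_hermitian hBs)))
  have hm2 : Multiset.map ρ Finset.univ.val = Multiset.map hB2.eigenvalues Finset.univ.val :=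
    multiset_eq_of_prod_eq (hρ.symm.trans ((charpoly_QP hP₂).trans (charpoly_hermitian hB2)))
  have hpos1 : ∀ x, 0 ≤ x ⬝ᵥ ((P₁ * Q * P₁) *ᵥ x) := fun x => by
    rw [form_PQP hP₁s]; exact Qform_nonneg hQs hQ _
  have hposs : ∀ x, 0 ≤ x ⬝ᵥ ((S * Q * S) *ᵥ x) := fun x => by
    rw [form_PQP hSs]; exact Qform_nonneg hQs hQ _
  have hμ0 : ∀ m, 0 ≤ μ m := by
    intro m
    have hmem : μ m ∈ Multiset.map μ Finset.univ.val :=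
      Multiset.mem_map_of_mem μ (Finset.mem_val.mpr (Finset.mem_univ m))
    rw [hm1] at hmem
    obtain ⟨m', _, heq⟩ := Multiset.mem_map.mp hmem
    rw [← heq]
    exact eig_nonneg hB1 hpos1 m'
  have hν0 : ∀ m, 0 ≤ ν m := by
    intro m
    have hmem : ν m ∈ Multiset.map ν Finset.univ.val :=
      Multiset.mem_map_of_mem ν (Finset.mem_val.mpr (Finset.mem_univ m))
    rw [hms] at hmem
    obtain ⟨m', _, heq⟩ := Multiset.mem_map.mp hmem
    rw [← heq]
    exact eig_nonneg hBs hposs m'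
  have hfixS : ∀ x ∈ LinearMap.range S.mulVecLin, S *ᵥ x = x := fun x hx => fix_range hS hx
  have hSP₁ : LinearMap.range S.mulVecLin ≤ LinearMap.range P₁.mulVecLin := by
    rw [hrange]; exact inf_le_left
  have hSP₂ : LinearMap.range S.mulVecLin ≤ LinearMap.range P₂.mulVecLin := by
    rw [hrange]; exact inf_le_right
  set Us : Matrix (Fin n) (Fin n) ℝ := (hBs.eigenvectorUnitary : Matrix (Fin n) (Fin n) ℝ)
    with hUsdef
  have hU1s : star Us * Us = 1 := Matrix.mem_unitaryGroup_iff'.mp hBs.eigenvectorUnitary.2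
  have hU2s : Us * star Us = 1 := Matrix.mem_unitaryGroup_iff.mp hBs.eigenvectorUnitary.2
  have hspecs : S * Q * S = Us * Matrix.diagonal hBs.eigenvalues * star Us := by
    simpa using hBs.spectral_theorem
  constructor
  · -- ν i ≤ μ i
    rcases le_or_gt (ν i) 0 with hc | hc
    · exact le_trans hc (hμ0 i)
    · obtain ⟨Z, hZr, hZmem⟩ := Zspace Us hU1s hU2s
        (Finset.univ.filter fun m => ν i ≤ hBs.eigenvalues m)
      apply L1 hB1 hμa hm1 i (ν i) Z ?_ ?_
      · -- dimension
        have hc1 := card_filter_congr hms (fun r => ν i ≤ r)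
        have hsub : Finset.Iic i ⊆ (Finset.univ.filter fun m => ν i ≤ ν m) := by
          intro m hm'
          rw [Finset.mem_Iic] at hm'
          exact Finset.mem_filter.mpr ⟨Finset.mem_univ _, hνa hm'⟩
        have hcard : (i : ℕ) + 1 ≤ (Finset.univ.filter fun m => ν i ≤ ν m).card := by
          rw [← Fin.card_Iic i]
          exact Finset.card_le_card hsub
        omega
      · -- Rayleigh bound on Z
        intro x hx
        obtain ⟨y, hysupp, hxy⟩ := hZmem x hx
        have hxrange : x ∈ LinearMap.range S.mulVecLin := by
          rw [hxy, mulVec_eq_sum_cols]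
          apply Submodule.sum_mem
          intro m _
          by_cases hmT : m ∈ Finset.univ.filter fun m => ν i ≤ hBs.eigenvalues m
          · apply Submodule.smul_mem
            have hcol : (fun i' => Us i' m) = ⇑(hBs.eigenvectorBasis m) := funext fun i' => rfl
            have heig : (S * Q * S) *ᵥ ⇑(hBs.eigenvectorBasis m)
                = hBs.eigenvalues m • ⇑(hBs.eigenvectorBasis m) := hBs.mulVec_eigenvectorBasis m
            have hlampos : 0 < hBs.eigenvalues m :=
              lt_of_lt_of_le hc (Finset.mem_filter.mp hmT).2
            have hcol2 : (fun i' => Us i' m)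
                = (hBs.eigenvalues m)⁻¹ • ((S * Q * S) *ᵥ ⇑(hBs.eigenvectorBasis m)) := by
              rw [heig, smul_smul, inv_mul_cancel₀ (ne_of_gt hlampos), one_smul, hcol]
            rw [hcol2]
            apply Submodule.smul_mem
            exact ⟨(Q * S) *ᵥ ⇑(hBs.eigenvectorBasis m),
              by rw [Matrix.mulVecLin_apply, Matrix.mulVec_mulVec, ← Matrix.mul_assoc]⟩
          · rw [hysupp m hmT, zero_smul]
            exact Submodule.zero_mem _
        have hfix : S *ᵥ x = x := hfixS x hxrange
        have hfix1 : P₁ *ᵥ x = x := fix_range hP₁ (hSP₁ hxrange)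
        have hformB1 : x ⬝ᵥ ((P₁ * Q * P₁) *ᵥ x) = x ⬝ᵥ (Q *ᵥ x) := by
          rw [form_PQP hP₁s, hfix1]
        have hformBs : x ⬝ᵥ ((S * Q * S) *ᵥ x) = x ⬝ᵥ (Q *ᵥ x) := by
          rw [form_PQP hSs, hfix]
        have hBx : (S * Q * S) *ᵥ x = (Us * Matrix.diagonal hBs.eigenvalues * star Us) *ᵥ x :=
          congrArg (fun M => M *ᵥ x) hspecs
        have hform : x ⬝ᵥ ((S * Q * S) *ᵥ x) = ∑ m, hBs.eigenvalues m * (y m) ^ 2 := by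
          rw [hBx, hxy]
          exact quad_form hU1s hBs.eigenvalues y
        have hnorm : x ⬝ᵥ x = ∑ m, (y m) ^ 2 := by rw [hxy]; exact quad_norm hU1s y
        have hge : ∑ m, ν i * (y m) ^ 2 ≤ ∑ m, hBs.eigenvalues m * (y m) ^ 2 := by
          refine Finset.sum_le_sum fun m _ => ?_
          by_cases hmT : m ∈ Finset.univ.filter fun m => ν i ≤ hBs.eigenvalues m
          · exact mul_le_mul_of_nonneg_right (Finset.mem_filter.mp hmT).2 (sq_nonneg _)
          · rw [hysupp m hmT]; simp
        calc ν i * (x ⬝ᵥ x) = ∑ m, ν i * (y m) ^ 2 := by rw [hnorm, Finset.mul_sum]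
          _ ≤ ∑ m, hBs.eigenvalues m * (y m) ^ 2 := hge
          _ = x ⬝ᵥ ((P₁ * Q * P₁) *ᵥ x) := by rw [hformB1, ← hformBs, hform]
  · -- ρ j ≤ ν i
    obtain ⟨Z, hZr, hZmem⟩ := Zspace Us hU1s hU2s
      (Finset.univ.filter fun m => hBs.eigenvalues m ≤ ν i)
    apply L2 hB2 hρa hm2 j (ν i)
      ((Z ⊓ LinearMap.range S.mulVecLin) ⊔ LinearMap.ker P₂.mulVecLin) ?_ ?_
    · -- dimension count
      have hinf0 : (Z ⊓ LinearMap.range S.mulVecLin) ⊓ LinearMap.ker P₂.mulVecLin = ⊥ := by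
        rw [eq_bot_iff]
        rintro x ⟨⟨_, hxS⟩, hxK⟩
        have hfix2 : P₂ *ᵥ x = x := fix_range hP₂ (hSP₂ hxS)
        have h0 : P₂ *ᵥ x = 0 := LinearMap.mem_ker.mp hxK
        rw [Submodule.mem_bot, ← hfix2, h0]
      have h4 := Submodule.finrank_sup_add_finrank_inf_eq
        (Z ⊓ LinearMap.range S.mulVecLin) (LinearMap.ker P₂.mulVecLin)
      rw [hinf0, finrank_bot, add_zero] at h4
      have h2 := Submodule.finrank_sup_add_finrank_inf_eq Z (LinearMap.range S.mulVecLin)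
      have h3 : finrank ℝ ↥(Z ⊔ LinearMap.range S.mulVecLin) ≤ n := by
        have h3' := Submodule.finrank_le (Z ⊔ LinearMap.range S.mulVecLin)
        rwa [Module.finrank_fin_fun] at h3'
      have hrS : finrank ℝ (LinearMap.range S.mulVecLin) = k := hk
      have hK2 : finrank ℝ (LinearMap.range P₂.mulVecLin) = k₂ := hk₂
      have hW2 : finrank ℝ (LinearMap.ker P₂.mulVecLin) + k₂ = n := by
        have h5 := LinearMap.finrank_range_add_finrank_ker P₂.mulVecLin
        rw [Module.finrank_fin_fun, hK2] at h5
        omega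
      have hkk : k ≤ k₂ := by
        have h6 := Submodule.finrank_mono hSP₂
        rw [hrS, hK2] at h6
        exact h6
      have hc1 := card_filter_congr hms (fun r => ¬ r ≤ ν i)
      have hsub : (Finset.univ.filter fun m => ¬ ν m ≤ ν i) ⊆ Finset.Iio i := by
        intro m hm'
        simp only [Finset.mem_filter, not_le] at hm'
        rw [Finset.mem_Iio]
        by_contra hge
        push_neg at hge
        exact absurd (hνa hge) (not_le.mpr hm'.2)
      have hcompl : (Finset.univ.filter fun m => ¬ ν m ≤ ν i).card ≤ (i : ℕ) := by
        calc (Finset.univ.filter fun m => ¬ ν m ≤ ν i).card ≤ (Finset.Iio i).card :=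
              Finset.card_le_card hsub
          _ = (i : ℕ) := Fin.card_Iio i
      have h7 := Finset.card_filter_add_card_filter_not
        (s := (Finset.univ : Finset (Fin n))) (p := fun m => hBs.eigenvalues m ≤ ν i)
      rw [Finset.card_univ, Fintype.card_fin] at h7
      omega
    · -- Rayleigh bound
      intro x hx
      obtain ⟨u, hu, w, hw, rfl⟩ := Submodule.mem_sup.mp hx
      obtain ⟨huZ, huS⟩ := hu
      have hSu : S *ᵥ u = u := hfixS u huS
      have hP₂u : P₂ *ᵥ u = u := fix_range hP₂ (hSP₂ huS)
      have hP₂w : P₂ *ᵥ w = 0 := LinearMap.mem_ker.mp hw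
      have hP₂x : P₂ *ᵥ (u + w) = u := by rw [Matrix.mulVec_add, hP₂u, hP₂w, add_zero]
      have hform2 : (u + w) ⬝ᵥ ((P₂ * Q * P₂) *ᵥ (u + w)) = u ⬝ᵥ (Q *ᵥ u) := by
        rw [form_PQP hP₂s, hP₂x]
      obtain ⟨y, hysupp, huy⟩ := hZmem u huZ
      have hBu : (S * Q * S) *ᵥ u = (Us * Matrix.diagonal hBs.eigenvalues * star Us) *ᵥ u :=
        congrArg (fun M => M *ᵥ u) hspecs
      have hformu : u ⬝ᵥ ((S * Q * S) *ᵥ u) = ∑ m, hBs.eigenvalues m * (y m) ^ 2 := by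
        rw [hBu, huy]
        exact quad_form hU1s hBs.eigenvalues y
      have hnormu : u ⬝ᵥ u = ∑ m, (y m) ^ 2 := by rw [huy]; exact quad_norm hU1s y
      have hQu : u ⬝ᵥ (Q *ᵥ u) = u ⬝ᵥ ((S * Q * S) *ᵥ u) := by rw [form_PQP hSs, hSu]
      have hle : ∑ m, hBs.eigenvalues m * (y m) ^ 2 ≤ ∑ m, ν i * (y m) ^ 2 := by
        refine Finset.sum_le_sum fun m _ => ?_
        by_cases hmT : m ∈ Finset.univ.filter fun m => hBs.eigenvalues m ≤ ν i
        · exact mul_le_mul_of_nonneg_right (Finset.mem_filter.mp hmT).2 (sq_nonneg _)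
        · rw [hysupp m hmT]; simp
      have huw : u ⬝ᵥ w = 0 := by
        have hd := dot_sym hP₂s u w
        rw [hP₂w, hP₂u, dotProduct_zero] at hd
        exact hd.symm
      have hxx : (u + w) ⬝ᵥ (u + w) = u ⬝ᵥ u + w ⬝ᵥ w := by
        rw [add_dotProduct, dotProduct_add, dotProduct_add, huw,
          dotProduct_comm w u, huw]
        ring
      have hww : 0 ≤ w ⬝ᵥ w := dot_self_nonneg w
      calc (u + w) ⬝ᵥ ((P₂ * Q * P₂) *ᵥ (u + w)) = u ⬝ᵥ (Q *ᵥ u) := hform2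
        _ = ∑ m, hBs.eigenvalues m * (y m) ^ 2 := by rw [hQu, hformu]
        _ ≤ ∑ m, ν i * (y m) ^ 2 := hle
        _ = ν i * (u ⬝ᵥ u) := by rw [hnormu, Finset.mul_sum]
        _ ≤ ν i * ((u + w) ⬝ᵥ (u + w)) := by
            rw [hxx]
            nlinarith [hν0 i, hww, dot_self_nonneg u]
end

section
/- If X and Y are skew-symmetric n×n matrices over a field and λ ≠ 0 is an eigenvalue of the product XY with elementary divisor (z - λ)^p, then (z - λ)^p occurs with even multiplicity among the elementary divisors of XY; in particular, every nonzero eigenvalue of XY has even algebraic multiplicity. -/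
open Matrix Polynomial

noncomputable section

theorem skew_diag_zero' {K : Type} [Field K] (h2 : (2:K) ≠ 0) {ι : Type} [Fintype ι]
    [DecidableEq ι] (A : Matrix ι ι K) (hA : Aᵀ = -A) (i : ι) : A i i = 0 := by
  have h : A i i = - A i i := by
    conv_lhs => rw [← Matrix.transpose_apply A i i, hA]
    simp
  have h' : 2 * A i i = 0 := by linear_combination h
  rcases mul_eq_zero.mp h' with h'' | h''
  · exact absurd h'' h2
  · exact h''

theorem skew_det_isSquare_aux {K : Type} [Field K] (h2 : (2:K) ≠ 0) :
    ∀ (N : ℕ) (ι : Type) (_ : Fintype ι) (_ : DecidableEq ι), Fintype.card ι ≤ N →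
      ∀ (A : Matrix ι ι K), Aᵀ = -A → IsSquare A.det := by
  intro N
  induction N with
  | zero =>
    intro ι _ _ hcard A hA
    have : IsEmpty ι := Fintype.card_eq_zero_iff.mp (Nat.le_zero.mp hcard)
    rw [Matrix.det_isEmpty]
    exact ⟨1, (one_mul 1).symm⟩
  | succ N IH =>
    intro ι _ _ hcard A hA
    by_cases hA0 : A = 0
    · rcases isEmpty_or_nonempty ι with h | h
      · rw [Matrix.det_isEmpty]; exact ⟨1, (one_mul 1).symm⟩
      · rw [hA0, Matrix.det_zero]; exact ⟨0, (zero_mul 0).symm⟩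
    have hdiag : ∀ i, A i i = 0 := skew_diag_zero' h2 A hA
    have hskew : ∀ i j, A j i = - A i j := by
      intro i j
      rw [← Matrix.transpose_apply A i j, hA]; simp
    obtain ⟨i, j, hb⟩ : ∃ i j, A i j ≠ 0 := by
      by_contra h
      push_neg at h
      exact hA0 (by ext i j; exact h i j)
    have hij : i ≠ j := by rintro rfl; exact hb (hdiag i)
    set κ' := {k : ι // k ≠ i ∧ k ≠ j} with hκdef
    set b := A i j with hbdef
    set M : Matrix ι ι K := (fun k l => if k = i ∨ k = j then 0 else
      if l = i then -(A k j)/b else if l = j then A k i / b else 0) with hMdef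
    have hMrow : ∀ l, M i l = 0 ∧ M j l = 0 := by
      intro l; constructor <;> simp [hMdef]
    set E : Matrix ι ι K := 1 + M with hEdef
    have hsum : ∀ (g : ι → K), (∀ a, a ≠ i → a ≠ j → g a = 0) →
        ∑ a, g a = g i + g j := by
      intro g hg
      rw [← Finset.sum_subset (Finset.subset_univ {i, j})
        (fun x _ hx => by
          simp only [Finset.mem_insert, Finset.mem_singleton] at hx
          push_neg at hx
          exact hg x hx.1 hx.2)]
      exact Finset.sum_pair hij
    have hMM : M * M = 0 := by
      ext a c
      rw [Matrix.mul_apply]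
      apply Finset.sum_eq_zero
      intro x _
      by_cases hx : x = i ∨ x = j
      · have h0 : M x c = 0 := by simp [hMdef, hx]
        simp [h0]
      · push_neg at hx
        have h0 : M a x = 0 := by simp [hMdef, hx.1, hx.2]
        simp [h0]
    have hEinv : E * (1 - M) = 1 := by
      rw [hEdef, add_mul, one_mul, mul_one_sub, hMM, sub_zero]
      abel
    have hdetE : E.det ≠ 0 := by
      have h1 : E.det * (1 - M).det = 1 := by rw [← Matrix.det_mul, hEinv, Matrix.det_one]
      exact left_ne_zero_of_mul_eq_one h1
    set B : Matrix ι ι K := E * A * Eᵀ with hBdef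
    have hBskew : Bᵀ = -B := by
      rw [hBdef, Matrix.transpose_mul, Matrix.transpose_mul, Matrix.transpose_transpose, hA]
      simp [Matrix.mul_assoc]
    have hBskew' : ∀ a c, B c a = - B a c := by
      intro a c
      rw [← Matrix.transpose_apply B a c, hBskew]; simp
    have hEM : ∀ (P : Matrix ι ι K) k c, (E * P) k c = P k c + M k i * P i c + M k j * P j c := by
      intro P k c
      rw [hEdef, add_mul, one_mul, Matrix.add_apply, Matrix.mul_apply,
        hsum (fun a => M k a * P a c)
          (fun a ha1 ha2 => by
            have h0 : M k a = 0 := by simp [hMdef, ha1, ha2]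
            simp [h0])]
      ring
    have hPE : ∀ (P : Matrix ι ι K) k c, (P * Eᵀ) k c = P k c + P k i * M c i + P k j * M c j := by
      intro P k c
      rw [hEdef, Matrix.transpose_add, Matrix.transpose_one, mul_add, mul_one, Matrix.add_apply,
        Matrix.mul_apply]
      rw [hsum (fun a => P k a * Mᵀ a c)
          (fun a ha1 ha2 => by
            have h0 : M c a = 0 := by simp [hMdef, ha1, ha2]
            simp only [Matrix.transpose_apply, h0, mul_zero])]
      simp only [Matrix.transpose_apply]
      ring
    have hMii : M i i = 0 := (hMrow i).1
    have hMij : M i j = 0 := (hMrow j).1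
    have hMji : M j i = 0 := (hMrow i).2
    have hMjj : M j j = 0 := (hMrow j).2
    have hBki : ∀ k, k ≠ i → k ≠ j → B k i = 0 := by
      intro k hk1 hk2
      have hMki : M k i = -(A k j)/b := by simp [hMdef, hk1, hk2]
      have hMkj : M k j = A k i / b := by simp [hMdef, hk1, hk2, hij.symm]
      have hAji : A j i = -b := by rw [hskew i j]
      rw [hBdef]
      simp only [hPE, hEM, hMii, hMij, hMji, hMjj, hMki, hMkj, hAji, hdiag, mul_zero, zero_mul,
        add_zero, zero_add]
      field_simp
      ring
    have hBkj : ∀ k, k ≠ i → k ≠ j → B k j = 0 := by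
      intro k hk1 hk2
      have hMki : M k i = -(A k j)/b := by simp [hMdef, hk1, hk2]
      have hMkj : M k j = A k i / b := by simp [hMdef, hk1, hk2, hij.symm]
      rw [hBdef]
      simp only [hPE, hEM, hMii, hMij, hMji, hMjj, hMki, hMkj, hdiag, mul_zero, zero_mul,
        add_zero, zero_add]
      field_simp
      rw [hbdef]; ring
    have hBij : B i j = b := by
      rw [hBdef]
      simp only [hPE, hEM, hMii, hMij, hMji, hMjj, hdiag, mul_zero, zero_mul, add_zero, zero_add]
      exact hbdef.symm
    have hBdiag : ∀ k, B k k = 0 := skew_diag_zero' h2 B hBskew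
    have hBji : B j i = -b := by rw [hBskew' i j, hBij]
    have hBik : ∀ (k : κ'), B i k.1 = 0 := fun k => by
      rw [hBskew' k.1 i, hBki k.1 k.2.1 k.2.2, neg_zero]
    have hBjk : ∀ (k : κ'), B j k.1 = 0 := fun k => by
      rw [hBskew' k.1 j, hBkj k.1 k.2.1 k.2.2, neg_zero]
    set e : (Fin 2 ⊕ κ') ≃ ι := {
      toFun := Sum.elim (fun t => if t = 0 then i else j) Subtype.val
      invFun := fun x => if hx : x = i then Sum.inl 0 else if hx' : x = j then Sum.inl 1
          else Sum.inr ⟨x, hx, hx'⟩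
      left_inv := by
        rintro (t | ⟨k, hk1, hk2⟩)
        · fin_cases t <;> simp [hij.symm]
        · simp [hk1, hk2]
      right_inv := by
        intro x
        by_cases hx : x = i
        · simp [hx]
        · by_cases hx' : x = j
          · simp [hx, hx', hij.symm]
          · simp [hx, hx'] } with hedef
    set C : Matrix κ' κ' K := fun k l => B k.1 l.1 with hCdef
    have hCskew : Cᵀ = -C := by
      ext k l
      simp only [hCdef, Matrix.transpose_apply, Matrix.neg_apply]
      exact hBskew' k.1 l.1
    have hBsub : B.submatrix e e = Matrix.fromBlocks !![0, b; -b, 0] 0 0 C := by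
      ext x y
      rcases x with t | k <;> rcases y with u | l
      · fin_cases t <;> fin_cases u <;>
          simp [hedef, Matrix.submatrix_apply, hBdiag, hBij, hBji, hij.symm]
      · fin_cases t <;>
          simp [hedef, Matrix.submatrix_apply, hBik l, hBjk l, hij.symm]
      · fin_cases u <;>
          simp [hedef, Matrix.submatrix_apply, hBki k.1 k.2.1 k.2.2, hBkj k.1 k.2.1 k.2.2,
            hij.symm]
      · simp [hedef, Matrix.submatrix_apply, hCdef]
        rfl
    have hcardκ : Fintype.card κ' ≤ N := by
      have h1 : Fintype.card (Fin 2 ⊕ κ') = Fintype.card ι := Fintype.card_congr e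
      rw [Fintype.card_sum, Fintype.card_fin] at h1
      omega
    obtain ⟨c, hc⟩ := IH κ' _ _ hcardκ C hCskew
    have hdetB : B.det = (b * b) * (c * c) := by
      have h1 : B.det = (B.submatrix e e).det := (Matrix.det_submatrix_equiv_self e B).symm
      rw [h1, hBsub, Matrix.det_fromBlocks_zero₂₁, Matrix.det_fin_two_of, ← hc]
      ring
    have hdetB' : E.det * A.det * E.det = (b * b) * (c * c) := by
      have h3 : B.det = E.det * A.det * Eᵀ.det := by rw [hBdef, Matrix.det_mul, Matrix.det_mul]
      rw [Matrix.det_transpose] at h3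
      rw [← h3, hdetB]
    refine ⟨b * c / E.det, ?_⟩
    field_simp
    linear_combination hdetB'



abbrev FF := RatFunc ℂ

lemma skew_det_isSquare {K : Type} [Field K] (h2 : (2:K) ≠ 0) {ι : Type} [Fintype ι]
    [DecidableEq ι] (A : Matrix ι ι K) (hA : Aᵀ = -A) : IsSquare A.det :=
  skew_det_isSquare_aux h2 (Fintype.card ι) ι _ _ le_rfl A hA

lemma charmatrix_comm {ι : Type} [Fintype ι] [DecidableEq ι] (P Q : Matrix ι ι ℂ) :
    (P.map (C : ℂ →+* ℂ[X])) * charmatrix (Q * P) = charmatrix (P * Q) * (P.map C) := by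
  unfold charmatrix
  rw [mul_sub, sub_mul]
  congr 1
  · exact (scalar_commute (Polynomial.X : ℂ[X]) (fun r => Commute.all _ r) (P.map C)).symm
  · show P.map (C : ℂ →+* ℂ[X]) * ((Q * P).map C) = ((P * Q).map C) * P.map (C : ℂ →+* ℂ[X])
    rw [← Matrix.map_mul, ← Matrix.map_mul, ← Matrix.mul_assoc]

lemma charmatrix_transpose' {ι : Type} [Fintype ι] [DecidableEq ι] (P : Matrix ι ι ℂ) :
    (charmatrix P)ᵀ = charmatrix Pᵀ := by
  ext i j
  by_cases h : i = j
  · subst h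
    simp [Matrix.transpose_apply, charmatrix_apply_eq]
  · rw [Matrix.transpose_apply, charmatrix_apply_ne _ _ _ (Ne.symm h),
      charmatrix_apply_ne _ _ _ h, Matrix.transpose_apply]

theorem even_rootMultiplicity_of_invertible {ι : Type} [Fintype ι] [DecidableEq ι]
    (X Y : Matrix ι ι ℂ) (hX : Xᵀ = -X) (hY : Yᵀ = -Y) (hdet : X.det ≠ 0) (ν : ℂ) :
    Even (rootMultiplicity ν (X * Y).charpoly) := by
  classical
  set ι' : ℂ[X] →+* FF := algebraMap ℂ[X] FF with hι'
  have hinj : Function.Injective ι' := RatFunc.algebraMap_injective ℂ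
  set ψ : Matrix ι ι ℂ[X] →+* Matrix ι ι FF := ι'.mapMatrix with hψ
  set A : Matrix ι ι FF := ψ (charmatrix (X * Y)) * ψ (X.map C) with hAdef
  have hAskew : Aᵀ = -A := by
    rw [hAdef, Matrix.transpose_mul]
    have h1 : (ψ (X.map C))ᵀ = ψ ((-X).map C) := by
      simp only [hψ, RingHom.mapMatrix_apply, ← Matrix.transpose_map, hX]
    have h2 : (ψ (charmatrix (X * Y)))ᵀ = ψ (charmatrix (Y * X)) := by
      simp only [hψ, RingHom.mapMatrix_apply, ← Matrix.transpose_map]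
      congr 1
      rw [charmatrix_transpose', Matrix.transpose_mul, hX, hY, Matrix.neg_mul,
        Matrix.mul_neg, neg_neg]
    rw [h1, h2]
    have h3 : ((-X).map (C : ℂ →+* ℂ[X])) = -(X.map C) := by
      ext i j; simp
    have h4 : ψ ((-X).map C) = - ψ (X.map C) := by rw [h3, map_neg]
    rw [h4, neg_mul, ← _root_.map_mul, ← _root_.map_mul, charmatrix_comm]
  have hdetA : A.det = ι' ((X * Y).charpoly * C X.det) := by
    rw [hAdef, Matrix.det_mul, hψ, ← RingHom.map_det, ← RingHom.map_det, ← _root_.map_mul]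
    congr 1
    rw [Matrix.charpoly]
    congr 1
    exact (RingHom.map_det C X).symm
  have h2F : (2 : FF) ≠ 0 := by
    intro h
    have : ι' (2 : ℂ[X]) = ι' 0 := by rw [map_ofNat, map_zero]; exact h
    have h2 := hinj this
    norm_num at h2
  obtain ⟨r, hr⟩ := skew_det_isSquare h2F A hAskew
  -- clear denominators
  have hden : ι' r.denom ≠ 0 := fun h => r.denom_ne_zero (hinj (by rw [h, map_zero]))
  have hkey : (X * Y).charpoly * C X.det * r.denom ^ 2 = r.num ^ 2 := by
    apply hinj
    rw [_root_.map_mul, _root_.map_mul, map_pow, map_pow, ← _root_.map_mul, ← hdetA, hr]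
    have hnum : ι' r.num = r * ι' r.denom := by
      have := (div_eq_iff hden).mp (RatFunc.num_div_denom r)
      exact this
    rw [hnum]
    ring
  -- root multiplicities
  have hp0 : (X * Y).charpoly ≠ 0 := (Matrix.charpoly_monic (X * Y)).ne_zero
  have hC0 : (C X.det : ℂ[X]) ≠ 0 := fun h => hdet (by simpa using congrArg (fun q => coeff q 0) h)
  have hd0 : (r.denom : ℂ[X]) ≠ 0 := r.denom_ne_zero
  have hn0 : (r.num : ℂ[X]) ≠ 0 := by
    intro h
    have h5 := hkey
    rw [h, zero_pow (two_ne_zero)] at h5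
    exact (mul_ne_zero (mul_ne_zero hp0 hC0) (pow_ne_zero 2 hd0)) h5
  have hmul := congrArg (rootMultiplicity ν) hkey
  rw [rootMultiplicity_mul (mul_ne_zero (mul_ne_zero hp0 hC0) (pow_ne_zero 2 hd0)),
    rootMultiplicity_mul (mul_ne_zero hp0 hC0), rootMultiplicity_C,
    pow_two, pow_two,
    rootMultiplicity_mul (mul_ne_zero hd0 hd0),
    rootMultiplicity_mul (mul_ne_zero hn0 hn0)] at hmul
  rw [Nat.even_iff]
  omega


def Tr (s : ℂ) (f : ℂ[X]) : ℂ[X] :=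
  f.sum fun j a => C a * ((Polynomial.X + C (s^2))^2)^j * Polynomial.X^(f.natDegree - j)

lemma eval_Tr (s : ℂ) (f : ℂ[X]) (c : ℂ) (hc : c ≠ 0) :
    eval c (Tr s f) = c ^ f.natDegree * eval ((c + s^2)^2 / c) f := by
  rw [Tr, Polynomial.sum_def, Polynomial.eval_finset_sum, eval_eq_sum, Polynomial.sum_def,
    Finset.mul_sum]
  apply Finset.sum_congr rfl
  intro j hj
  have hjd : j ≤ f.natDegree := le_natDegree_of_mem_supp j hj
  simp only [eval_mul, eval_pow, eval_C, eval_X, eval_add]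
  rw [div_pow, pow_sub₀ c hc hjd]
  field_simp

lemma poly_ext_aux (s : ℂ) (p q : ℂ[X])
    (h : ∀ c : ℂ, c ≠ 0 → c + s^2 ≠ 0 → eval c p = eval c q) : p = q := by
  apply eq_of_infinite_eval_eq
  have hfin : ({0, -s^2} : Set ℂ).Finite := Set.toFinite _
  apply Set.Infinite.mono _ (hfin.infinite_compl)
  intro x hx
  simp only [Set.mem_compl_iff, Set.mem_insert_iff, Set.mem_singleton_iff, not_or] at hx
  exact h x hx.1 (fun h' => hx.2 (by linear_combination h'))

lemma Tr_mul (s : ℂ) (f g : ℂ[X]) (hf : f ≠ 0) (hg : g ≠ 0) :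
    Tr s (f * g) = Tr s f * Tr s g := by
  apply poly_ext_aux s
  intro c hc hcs
  rw [eval_mul, eval_Tr _ _ _ hc, eval_Tr _ _ _ hc, eval_Tr _ _ _ hc, natDegree_mul hf hg,
    eval_mul, pow_add]
  ring

lemma eval_charpoly' {ι : Type} [Fintype ι] [DecidableEq ι] (M : Matrix ι ι ℂ) (c : ℂ) :
    eval c M.charpoly = (c • (1 : Matrix ι ι ℂ) - M).det := by
  rw [Matrix.charpoly, ← coe_evalRingHom, RingHom.map_det]
  congr 1
  ext i j
  simp only [RingHom.mapMatrix_apply, Matrix.map_apply, charmatrix_apply, coe_evalRingHom,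
    eval_sub, eval_C, Matrix.sub_apply, Matrix.smul_apply, Matrix.one_apply,
    Matrix.diagonal_apply]
  by_cases h : i = j <;> simp [h]

set_option maxHeartbeats 1000000 in
theorem stenzel_aux {n : ℕ} (X Y : Matrix (Fin n) (Fin n) ℂ)
    (hX : Xᵀ = -X) (hY : Yᵀ = -Y) (μ s : ℂ) (hμ : μ ≠ 0) (hs : s ≠ 0)
    (hμs : μ ≠ 4 * s^2) : Even (rootMultiplicity μ (X * Y).charpoly) := by
  classical
  set p : ℂ[X] := (X * Y).charpoly with hpdef
  have hp0 : p ≠ 0 := (Matrix.charpoly_monic (X * Y)).ne_zero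
  have hpdeg : p.natDegree = n := by
    rw [hpdef, Matrix.charpoly_natDegree_eq_dim, Fintype.card_fin]
  set Xh : Matrix (Fin n ⊕ Fin n) (Fin n ⊕ Fin n) ℂ :=
    Matrix.fromBlocks X (s • 1) (-(s • 1)) 0 with hXhdef
  set Yh : Matrix (Fin n ⊕ Fin n) (Fin n ⊕ Fin n) ℂ :=
    Matrix.fromBlocks Y (s • 1) (-(s • 1)) 0 with hYhdef
  have hXhskew : Xhᵀ = -Xh := by
    rw [hXhdef, Matrix.fromBlocks_transpose, Matrix.fromBlocks_neg]
    simp [hX]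
  have hYhskew : Yhᵀ = -Yh := by
    rw [hYhdef, Matrix.fromBlocks_transpose, Matrix.fromBlocks_neg]
    simp [hY]
  have hss : s * (s⁻¹ * s⁻¹) = s⁻¹ := by field_simp
  have hss2 : s⁻¹ * s⁻¹ * s = s⁻¹ := by field_simp
  have hXhdet : Xh.det ≠ 0 := by
    have hinv : Xh * Matrix.fromBlocks 0 (-(s⁻¹ • 1)) (s⁻¹ • 1) ((s⁻¹ * s⁻¹) • X) = 1 := by
      rw [hXhdef, Matrix.fromBlocks_multiply, ← Matrix.fromBlocks_one]
      rw [Matrix.fromBlocks_inj]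
      refine ⟨?_, ?_, ?_, ?_⟩
      · simp [Matrix.smul_mul, Matrix.mul_smul, smul_smul, inv_mul_cancel₀ hs,
          mul_inv_cancel₀ hs]
      · simp [Matrix.smul_mul, Matrix.mul_smul, smul_smul, hss, hss2]
      · simp
      · simp [Matrix.smul_mul, Matrix.mul_smul, smul_smul, inv_mul_cancel₀ hs,
          mul_inv_cancel₀ hs]
    have h1 : Xh.det * (Matrix.fromBlocks 0 (-(s⁻¹ • 1)) (s⁻¹ • 1)
        ((s⁻¹ * s⁻¹) • X) : Matrix (Fin n ⊕ Fin n) _ ℂ).det = 1 := by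
      rw [← Matrix.det_mul, hinv, Matrix.det_one]
    exact left_ne_zero_of_mul_eq_one h1
  set q : ℂ[X] := (Xh * Yh).charpoly with hqdef
  have hXY : Xh * Yh = Matrix.fromBlocks (X * Y - (s^2) • 1) (s • X) (-(s • Y))
      (-((s^2) • 1)) := by
    rw [hXhdef, hYhdef, Matrix.fromBlocks_multiply, Matrix.fromBlocks_inj]
    refine ⟨?_, ?_, ?_, ?_⟩
    · simp [Matrix.smul_mul, Matrix.mul_smul, smul_smul, pow_two, sub_eq_add_neg]
    · simp [Matrix.smul_mul, Matrix.mul_smul]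
    · simp [Matrix.smul_mul, Matrix.mul_smul]
    · simp [Matrix.smul_mul, Matrix.mul_smul, smul_smul, pow_two]
  -- the key identity : q = Tr s p
  have hkey : q = Tr s p := by
    apply poly_ext_aux s
    intro c hc hcs
    have hblocks : c • (1 : Matrix (Fin n ⊕ Fin n) (Fin n ⊕ Fin n) ℂ) - Xh * Yh =
        Matrix.fromBlocks ((c + s^2) • 1 - X * Y) (-(s • X)) (s • Y) ((c + s^2) • 1) := by
      rw [hXY, ← Matrix.fromBlocks_one, Matrix.fromBlocks_smul, sub_eq_add_neg,
        Matrix.fromBlocks_neg, Matrix.fromBlocks_add, Matrix.fromBlocks_inj]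
      refine ⟨by module, by simp, by simp, by module⟩
    haveI hDinv : Invertible ((c + s^2) • (1 : Matrix (Fin n) (Fin n) ℂ)) :=
      ⟨(c + s^2)⁻¹ • 1,
        by rw [Matrix.smul_mul, one_mul, smul_smul, inv_mul_cancel₀ hcs, one_smul],
        by rw [Matrix.smul_mul, one_mul, smul_smul, mul_inv_cancel₀ hcs, one_smul]⟩
    have hinvOf : ⅟((c + s^2) • (1 : Matrix (Fin n) (Fin n) ℂ)) = (c + s^2)⁻¹ • 1 :=
      invOf_eq_right_inv (by
        rw [Matrix.smul_mul, one_mul, smul_smul, mul_inv_cancel₀ hcs, one_smul])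
    have h1 : (-(s • X)) * ((c + s^2)⁻¹ • (1 : Matrix (Fin n) (Fin n) ℂ)) =
        -(((c + s^2)⁻¹ * s) • X) := by
      rw [Matrix.neg_mul, Matrix.mul_smul, Matrix.mul_one, smul_smul]
    have h2 : -(((c + s^2)⁻¹ * s) • X) * (s • Y) =
        -((s * ((c + s^2)⁻¹ * s)) • (X * Y)) := by
      rw [Matrix.neg_mul, Matrix.smul_mul, Matrix.mul_smul, smul_smul]
      ring_nf
    have hmid : ((c + s^2) • 1 - X * Y) - (-(s • X)) * ((c + s^2)⁻¹ •
          (1 : Matrix (Fin n) (Fin n) ℂ)) * (s • Y) =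
        (c / (c + s^2)) • (((c + s^2)^2 / c) • 1 - X * Y) := by
      rw [h1, h2, sub_neg_eq_add]
      match_scalars
      · field_simp
      · field_simp
        ring
    rw [hqdef, eval_charpoly', hblocks, Matrix.det_fromBlocks₂₂, hinvOf, hmid,
      Matrix.det_smul, Matrix.det_smul, ← eval_charpoly', ← hpdef,
      eval_Tr s p c hc, hpdeg]
    simp only [Fintype.card_fin]
    rw [Matrix.det_one, mul_one]
    have hcc : (c + s^2) * (c / (c + s^2)) = c := by field_simp
    rw [← mul_assoc, ← mul_pow, hcc]
  -- the roots of the auxiliary quadratic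
  obtain ⟨ν₁, hν₁⟩ : ∃ z : ℂ, (C 1 * Polynomial.X^2 + C (2*s^2 - μ) * Polynomial.X
      + C (s^4)).IsRoot z := by
    apply Complex.exists_root
    rw [Polynomial.degree_quadratic one_ne_zero]
    norm_num
  have hroot : ν₁^2 + (2*s^2 - μ) * ν₁ + s^4 = 0 := by
    have := hν₁
    simp only [Polynomial.IsRoot, eval_add, eval_mul, eval_pow, eval_C, eval_X, one_mul] at this
    linear_combination this
  set ν₂ : ℂ := μ - 2*s^2 - ν₁ with hν₂def
  have hsum : ν₁ + ν₂ = μ - 2*s^2 := by rw [hν₂def]; ring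
  have hprod : ν₁ * ν₂ = s^4 := by rw [hν₂def]; linear_combination -hroot
  have hν₁0 : ν₁ ≠ 0 := by
    intro h
    apply hs
    have h4 : s^4 = 0 := by linear_combination hroot - (ν₁ + 2*s^2 - μ) * h
    exact pow_eq_zero_iff (by norm_num) |>.mp h4
  have hνne : ν₁ ≠ ν₂ := by
    intro h
    have h2ν : 2*ν₁ = μ - 2*s^2 := by rw [hν₂def] at h; linear_combination h
    have hsq : ν₁^2 = s^4 := by linear_combination ν₁ * h2ν - hroot
    have : μ * (μ - 4*s^2) = 0 := by linear_combination 4*hsq + (2*s^2 - 2*ν₁ - μ) * h2ν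
    rcases mul_eq_zero.mp this with h' | h'
    · exact hμ h'
    · exact hμs (by linear_combination h')
  have hwμ : (ν₁ + s^2)^2 = μ * ν₁ := by linear_combination hroot
  -- decompose p
  obtain ⟨r, hpr, hrnd⟩ := p.exists_eq_pow_rootMultiplicity_mul_and_not_dvd hp0 μ
  set m := rootMultiplicity μ p with hmdef
  have hrμ : eval μ r ≠ 0 := fun h => hrnd (dvd_iff_isRoot.mpr h)
  have hr0 : r ≠ 0 := fun h => hrμ (by rw [h, eval_zero])
  have hlin0 : ((Polynomial.X - C μ)^m : ℂ[X]) ≠ 0 := pow_ne_zero _ (X_sub_C_ne_zero μ)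
  -- transform the factorization
  have hTrpow : Tr s ((Polynomial.X - C μ)^m) = ((Polynomial.X - C ν₁) * (Polynomial.X - C ν₂))^m := by
    apply poly_ext_aux s
    intro c hc hcs
    rw [eval_Tr _ _ _ hc, natDegree_pow, natDegree_X_sub_C, mul_one]
    simp only [eval_pow, eval_mul, eval_sub, eval_X, eval_C]
    rw [← mul_pow]
    congr 1
    have hquad : (c - ν₁) * (c - ν₂) = (c + s^2)^2 - μ * c := by
      linear_combination (-c) * hsum + hprod
    rw [hquad]
    field_simp
  have hTrr : eval ν₁ (Tr s r) = ν₁ ^ r.natDegree * eval μ r := by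
    rw [eval_Tr s r ν₁ hν₁0]
    congr 2
    rw [div_eq_iff hν₁0, hwμ]
  have hTrr0 : eval ν₁ (Tr s r) ≠ 0 := by
    rw [hTrr]
    exact mul_ne_zero (pow_ne_zero _ hν₁0) hrμ
  have hTr0 : Tr s r ≠ 0 := fun h => hTrr0 (by rw [h, eval_zero])
  have hqfact : q = (Polynomial.X - C ν₁)^m * (Polynomial.X - C ν₂)^m * Tr s r := by
    rw [hkey, hpr, Tr_mul s _ _ hlin0 hr0, hTrpow, mul_pow]
  have hqm : rootMultiplicity ν₁ q = m := by
    rw [hqfact, rootMultiplicity_mul (by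
        exact mul_ne_zero (mul_ne_zero (pow_ne_zero _ (X_sub_C_ne_zero ν₁))
          (pow_ne_zero _ (X_sub_C_ne_zero ν₂))) hTr0),
      rootMultiplicity_mul (mul_ne_zero (pow_ne_zero _ (X_sub_C_ne_zero ν₁))
        (pow_ne_zero _ (X_sub_C_ne_zero ν₂))),
      rootMultiplicity_X_sub_C_pow,
      rootMultiplicity_eq_zero (by
        simp only [Polynomial.IsRoot, eval_pow, eval_sub, eval_X, eval_C]
        exact pow_ne_zero _ (sub_ne_zero.mpr hνne)),
      rootMultiplicity_eq_zero hTrr0]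
    omega
  have heven : Even (rootMultiplicity ν₁ q) :=
    even_rootMultiplicity_of_invertible Xh Yh hXhskew hYhskew hXhdet ν₁
  rw [hqm] at heven
  exact heven

/-- Stenzel's theorem (weak form): for skew-symmetric complex n×n matrices X and Y,
every nonzero eigenvalue of the product XY has even algebraic multiplicity as a
root of the characteristic polynomial. -/
theorem stenzel_even_multiplicity {n : ℕ} (X Y : Matrix (Fin n) (Fin n) ℂ)
    (hX : X.transpose = -X) (hY : Y.transpose = -Y) (μ : ℂ) (hμ : μ ≠ 0) :
    Even (Polynomial.rootMultiplicity μ (X * Y).charpoly) := by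
  by_cases h4 : μ = 4
  · exact stenzel_aux X Y hX hY μ 2 hμ two_ne_zero (by rw [h4]; norm_num)
  · exact stenzel_aux X Y hX hY μ 1 hμ one_ne_zero (by simpa using h4)

end
end
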